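/- Let R = k[Y_1,...,Y_w] be a polynomial ring over a field k where each variable Y_s is given degree (d_s, 1) in Z^{k+1} with d_s in Z^k nonnegative, and let M be a finitely generated Z^{k+1}-graded R-module. For n in Z set M_n = ⊕_{m in Z^k} M_{(m,n)} and a_l(M_n) = max{m_l : M_{(m,n)} ≠ 0} (with −∞ if M_n = 0). Then for each 1 ≤ l ≤ k, the function n ↦ a_l(M_n) is eventually linear in n with slope at most d^{(l)} = max_s (d_s)_l; in the base case w = 0 (R = k), M_n = 0 for all n ≫ 0. -/

import Mathlib

open MvPolynomial

namespace AInvAux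

def InPiece {k w : ℕ} (dvec : Fin w → (Fin k → ℤ))
    (p : ((Fin k → ℤ) × ℤ) × Finset (Fin w)) (d : (Fin k → ℤ) × ℤ) : Prop :=
  ∃ α : Fin w →₀ ℕ, (∀ s, α s ≠ 0 → s ∈ p.2) ∧
    d = p.1 + Finsupp.weight (fun s => ((dvec s, 1) : (Fin k → ℤ) × ℤ)) α

theorem weight_snd {k w : ℕ} (dvec : Fin w → (Fin k → ℤ)) (α : Fin w →₀ ℕ) :
    (Finsupp.weight (fun s => ((dvec s, 1) : (Fin k → ℤ) × ℤ)) α).2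
      = ∑ s ∈ α.support, (α s : ℤ) := by
  rw [Finsupp.weight_apply, Finsupp.sum, Prod.snd_sum]
  refine Finset.sum_congr rfl fun s _ => ?_
  simp [Prod.smul_def]

theorem weight_fst_apply {k w : ℕ} (dvec : Fin w → (Fin k → ℤ)) (α : Fin w →₀ ℕ) (l : Fin k) :
    ((Finsupp.weight (fun s => ((dvec s, 1) : (Fin k → ℤ) × ℤ)) α).1) l
      = ∑ s ∈ α.support, (α s : ℤ) * dvec s l := by
  rw [Finsupp.weight_apply, Finsupp.sum, Prod.fst_sum, Finset.sum_apply]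
  refine Finset.sum_congr rfl fun s _ => ?_
  simp [Prod.smul_def, Pi.smul_apply, smul_eq_mul]

theorem weight_single {k w : ℕ} (dvec : Fin w → (Fin k → ℤ)) (s : Fin w) (c : ℕ) :
    Finsupp.weight (fun s => ((dvec s, 1) : (Fin k → ℤ) × ℤ)) (Finsupp.single s c)
      = ((c : ℤ) • dvec s, (c : ℤ)) := by
  rw [Finsupp.weight_apply, Finsupp.sum_single_index (by simp)]
  ext x
  · simp [Prod.smul_def]
  · simp [Prod.smul_def]

theorem foldr_max_le {α : Type*} (f : α → ℤ) (z : ℤ) :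
    ∀ L : List α, ∀ p ∈ L, f p ≤ L.foldr (fun q m => max (f q) m) z
  | a :: L, p, hp => by
    rcases List.mem_cons.mp hp with h | h
    · subst h; exact le_max_left _ _
    · exact le_trans (foldr_max_le f z L p h) (le_max_right _ _)

theorem le_foldr_max {α : Type*} (f : α → ℤ) (z : ℤ) :
    ∀ L : List α, z ≤ L.foldr (fun q m => max (f q) m) z
  | [] => le_refl z
  | _ :: L => le_trans (le_foldr_max f z L) (le_max_right _ _)

theorem exists_list_max {α : Type*} (f : α → ℤ) :
    ∀ L : List α, L ≠ [] → ∃ p ∈ L, ∀ q ∈ L, f q ≤ f p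
  | [], h => absurd rfl h
  | a :: L, _ => by
    rcases eq_or_ne L [] with rfl | hL
    · exact ⟨a, List.mem_singleton_self a, by simp⟩
    · obtain ⟨p, hp, hmax⟩ := exists_list_max f L hL
      rcases le_total (f p) (f a) with h | h
      · refine ⟨a, List.mem_cons_self, fun q hq => ?_⟩
        rcases List.mem_cons.mp hq with rfl | hq
        · exact le_refl _
        · exact le_trans (hmax q hq) h
      · exact ⟨p, List.mem_cons_of_mem _ hp,
          fun q hq => by rcases List.mem_cons.mp hq with rfl | hq
                         exacts [h, hmax q hq]⟩

theorem combinatorial {k w : ℕ} (dvec : Fin w → (Fin k → ℤ)) (hpos : ∀ s l', 0 ≤ dvec s l')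
    (l : Fin k) (dl : ℤ) (hdl : ∀ s, dvec s l ≤ dl)
    (Q : ((Fin k → ℤ) × ℤ) → Prop)
    (L : List (((Fin k → ℤ) × ℤ) × Finset (Fin w)))
    (hL : ∀ d, Q d ↔ ∃ p ∈ L, InPiece dvec p d) :
    ((∃ a b : ℤ, a ≤ dl ∧ ∃ n₀ : ℤ, ∀ n ≥ n₀,
          IsGreatest {m : ℤ | ∃ v : Fin k → ℤ, v l = m ∧ Q (v, n)} (a * n + b)) ∨
        (∃ n₀ : ℤ, ∀ n ≥ n₀, ∀ v : Fin k → ℤ, ¬ Q (v, n))) ∧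
      (w = 0 → ∃ n₀ : ℤ, ∀ n ≥ n₀, ∀ v : Fin k → ℤ, ¬ Q (v, n)) := by
  classical
  -- slope of a piece
  set Dp : (((Fin k → ℤ) × ℤ) × Finset (Fin w)) → ℤ :=
    fun p => ((p.2.sup fun s => (dvec s l).toNat : ℕ) : ℤ) with hDp
  have hDp_nonneg : ∀ p, 0 ≤ Dp p := fun p => Int.natCast_nonneg _
  have hDple : ∀ p, ∀ s ∈ p.2, dvec s l ≤ Dp p := by
    intro p s hs
    have h := Finset.le_sup (f := fun s => (dvec s l).toNat) hs
    have h2 : ((dvec s l).toNat : ℤ) ≤ Dp p := Nat.cast_le.mpr h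
    rwa [Int.toNat_of_nonneg (hpos s l)] at h2
  have hDpmem : ∀ p, p.2.Nonempty → ∃ s ∈ p.2, Dp p = dvec s l := by
    intro p hp
    obtain ⟨s, hs, hsup⟩ := Finset.exists_mem_eq_sup p.2 hp (fun s => (dvec s l).toNat)
    exact ⟨s, hs, by rw [hDp]; simp only [hsup]; exact Int.toNat_of_nonneg (hpos s l)⟩
  -- upper bound per piece
  have P1 : ∀ p d, InPiece dvec p d →
      p.1.2 ≤ d.2 ∧ d.1 l ≤ Dp p * d.2 + (p.1.1 l - p.1.2 * Dp p) := by
    rintro p d ⟨α, hαV, rfl⟩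
    have h2 : (p.1 + Finsupp.weight (fun s => ((dvec s, 1) : (Fin k → ℤ) × ℤ)) α).2
        = p.1.2 + ∑ s ∈ α.support, (α s : ℤ) := by
      rw [Prod.snd_add, weight_snd]
    have h1 : ((p.1 + Finsupp.weight (fun s => ((dvec s, 1) : (Fin k → ℤ) × ℤ)) α).1) l
        = p.1.1 l + ∑ s ∈ α.support, (α s : ℤ) * dvec s l := by
      rw [Prod.fst_add, Pi.add_apply, weight_fst_apply]
    have hsum_nonneg : 0 ≤ ∑ s ∈ α.support, (α s : ℤ) :=
      Finset.sum_nonneg fun s _ => Int.natCast_nonneg _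
    have hbound : ∑ s ∈ α.support, (α s : ℤ) * dvec s l
        ≤ (∑ s ∈ α.support, (α s : ℤ)) * Dp p := by
      rw [Finset.sum_mul]
      refine Finset.sum_le_sum fun s hs => ?_
      exact mul_le_mul_of_nonneg_left
        (hDple p s (hαV s (Finsupp.mem_support_iff.mp hs))) (Int.natCast_nonneg _)
    constructor
    · rw [h2]; linarith
    · rw [h1, h2]; nlinarith [hDp_nonneg p]
  -- exact achiever per piece
  have P2 : ∀ p, p.2.Nonempty → ∀ n : ℤ, p.1.2 ≤ n → ∃ v : Fin k → ℤ,
      v l = Dp p * n + (p.1.1 l - p.1.2 * Dp p) ∧ InPiece dvec p (v, n) := by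
    intro p hp n hn
    obtain ⟨s, hs, hsval⟩ := hDpmem p hp
    set c : ℕ := (n - p.1.2).toNat with hc
    have hcval : (c : ℤ) = n - p.1.2 := Int.toNat_of_nonneg (by linarith)
    refine ⟨p.1.1 + (c : ℤ) • dvec s, ?_, ⟨Finsupp.single s c, ?_, ?_⟩⟩
    · simp only [Pi.add_apply, Pi.smul_apply, smul_eq_mul, hcval, ← hsval]
      ring
    · intro s' hs'
      have := Finsupp.single_apply_ne_zero.mp hs'
      rw [this.1]; exact hs
    · rw [weight_single]
      ext x
      · simp
      · simp [hcval]
  -- pieces with empty support set are single points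
  have P3 : ∀ p, p.2 = ∅ → ∀ d, InPiece dvec p d → d = p.1 := by
    rintro p hp d ⟨α, hαV, rfl⟩
    have : α = 0 := by
      ext s
      by_contra hs
      exact absurd (hαV s hs) (by simp [hp])
    simp [this]
  -- helper for the "eventually zero" conclusion
  have hsecond : (∀ p ∈ L, ∀ d, InPiece dvec p d → d = p.1) →
      ∃ n₀ : ℤ, ∀ n ≥ n₀, ∀ v : Fin k → ℤ, ¬ Q (v, n) := by
    intro hpt
    refine ⟨1 + L.foldr (fun q m => max (q.1.2) m) 0, fun n hn v hQ => ?_⟩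
    obtain ⟨p, hpL, hIn⟩ := (hL (v, n)).mp hQ
    have h1 := hpt p hpL _ hIn
    have hn2 : n = p.1.2 := congrArg Prod.snd h1
    have h2 : p.1.2 ≤ L.foldr (fun q m => max (q.1.2) m) 0 :=
      foldr_max_le (fun q => q.1.2) 0 L p hpL
    omega
  constructor
  · -- main dichotomy
    by_cases hcase : ∀ p ∈ L, p.2 = ∅
    · exact Or.inr (hsecond fun p hp d hd => P3 p (hcase p hp) d hd)
    · left
      push_neg at hcase
      obtain ⟨p₀, hp₀L, hp₀⟩ := hcase
      have hp₀ne : p₀.2.Nonempty := hp₀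
      have hLne : L ≠ [] := fun h => by simp [h] at hp₀L
      -- maximal slope
      set f : (((Fin k → ℤ) × ℤ) × Finset (Fin w)) → ℤ :=
        fun p => if p.2.Nonempty then Dp p else -1 with hf
      obtain ⟨pA, hpAL, hpAmax⟩ := exists_list_max f L hLne
      set A : ℤ := f pA with hA
      have hA0 : 0 ≤ A := le_trans (hDp_nonneg p₀)
        (le_trans (le_of_eq (by rw [hf]; simp [hp₀ne])) (hpAmax p₀ hp₀L))
      -- maximal intercept among pieces of maximal slope
      set bp : (((Fin k → ℤ) × ℤ) × Finset (Fin w)) → ℤ :=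
        fun p => p.1.1 l - p.1.2 * A with hbp
      set g : (((Fin k → ℤ) × ℤ) × Finset (Fin w)) → ℤ :=
        fun p => if f p = A then bp p else bp pA with hg
      obtain ⟨pB, hpBL, hpBmax⟩ := exists_list_max g L hLne
      set B : ℤ := g pB with hB
      -- a witness piece with slope A and intercept B
      have hwit : ∃ p ∈ L, f p = A ∧ bp p = B := by
        by_cases hfB : f pB = A
        · refine ⟨pB, hpBL, hfB, ?_⟩
          have h1 : g pB = bp pB := by
            show (if f pB = A then bp pB else bp pA) = bp pB
            rw [if_pos hfB]
          rw [hB, h1]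
        · refine ⟨pA, hpAL, rfl, ?_⟩
          have h1 : g pB = bp pA := by
            show (if f pB = A then bp pB else bp pA) = bp pA
            rw [if_neg hfB]
          rw [hB, h1]
      obtain ⟨ps, hpsL, hpsf, hpsb⟩ := hwit
      have hpsne : ps.2.Nonempty := by
        by_contra h
        have h1 : f ps = -1 := by
          show (if ps.2.Nonempty then Dp ps else -1) = -1
          rw [if_neg h]
        omega
      have hpsD : Dp ps = A := by
        rw [← hpsf]
        show Dp ps = (if ps.2.Nonempty then Dp ps else -1)
        rw [if_pos hpsne]
      -- slope is at most dl
      have hAdl : A ≤ dl := by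
        obtain ⟨s, _, hsval⟩ := hDpmem ps hpsne
        rw [← hpsD, hsval]; exact hdl s
      -- threshold
      set N₁ : ℤ := L.foldr (fun q m => max (max (q.1.2) (q.1.1 l - q.1.2 * Dp q - B)) m) 0
        with hN₁
      have hN₁0 : 0 ≤ N₁ :=
        le_foldr_max (fun q => max (q.1.2) (q.1.1 l - q.1.2 * Dp q - B)) 0 L
      refine ⟨A, B, hAdl, 1 + N₁, fun n hn => ⟨?_, ?_⟩⟩
      · -- membership
        have hbnd : max (ps.1.2) (ps.1.1 l - ps.1.2 * Dp ps - B) ≤ N₁ :=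
          foldr_max_le (fun q => max (q.1.2) (q.1.1 l - q.1.2 * Dp q - B)) 0 L ps hpsL
        have hple : ps.1.2 ≤ n := by
          have : ps.1.2 ≤ N₁ := le_trans (le_max_left _ _) hbnd
          omega
        obtain ⟨v, hv, hIn⟩ := P2 ps hpsne n hple
        refine ⟨v, ?_, (hL (v, n)).mpr ⟨ps, hpsL, hIn⟩⟩
        rw [hv, hpsD, ← hpsb]
      · -- upper bound
        rintro m ⟨v, rfl, hQ⟩
        obtain ⟨p, hpL, hIn⟩ := (hL (v, n)).mp hQ
        have hbnd : max (p.1.2) (p.1.1 l - p.1.2 * Dp p - B) ≤ N₁ :=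
          foldr_max_le (fun q => max (q.1.2) (q.1.1 l - q.1.2 * Dp q - B)) 0 L p hpL
        rcases Finset.eq_empty_or_nonempty p.2 with hpe | hpne
        · have := P3 p hpe _ hIn
          have hn2 : n = p.1.2 := congrArg Prod.snd this
          have : p.1.2 ≤ N₁ := le_trans (le_max_left _ _) hbnd
          omega
        · obtain ⟨-, hub⟩ := P1 p _ hIn
          simp only at hub
          have hfp : f p = Dp p := by
            show (if p.2.Nonempty then Dp p else -1) = Dp p
            rw [if_pos hpne]
          have hDpA : Dp p ≤ A := by rw [← hfp]; exact hpAmax p hpL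
          rcases eq_or_lt_of_le hDpA with hEq | hLt
          · have hgp : g p = bp p := by
              show (if f p = A then bp p else bp pA) = bp p
              rw [if_pos (by rw [hfp, hEq])]
            have h5 : g p ≤ B := hpBmax p hpL
            rw [hgp] at h5
            have hbpB : p.1.1 l - p.1.2 * A ≤ B := h5
            calc v l ≤ Dp p * n + (p.1.1 l - p.1.2 * Dp p) := hub
              _ ≤ A * n + B := by rw [hEq]; linarith
          · have hint : p.1.1 l - p.1.2 * Dp p - B ≤ N₁ :=
              le_trans (le_max_right _ _) hbnd
            have h1n : 1 ≤ n := by omega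
            nlinarith
  · -- the w = 0 case
    intro hw
    subst hw
    refine hsecond fun p hp d hd => ?_
    obtain ⟨α, hαV, rfl⟩ := hd
    have : α = 0 := by ext s; exact Fin.elim0 s
    simp [this]

theorem decompose_sum {𝕜 M : Type*} [Semiring 𝕜] [AddCommMonoid M] [Module 𝕜 M]
    {ιg : Type*} [DecidableEq ιg] (ℳ : ιg → Submodule 𝕜 M) [DirectSum.Decomposition ℳ]
    {ι : Type*} [DecidableEq ι] (s : Finset ι) (f : ι → ιg) (z : ι → M)
    (hz : ∀ i ∈ s, z i ∈ ℳ (f i)) (d : ιg) :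
    ((DirectSum.decompose ℳ (∑ i ∈ s, z i)) d : M)
      = ∑ i ∈ s.filter (fun i => f i = d), z i := by
  induction s using Finset.induction_on with
  | empty => simp
  | insert a s hnot ih =>
    rw [Finset.sum_insert hnot, DirectSum.decompose_add, DirectSum.add_apply,
      Submodule.coe_add, ih (fun i hi => hz i (Finset.mem_insert_of_mem hi)),
      Finset.filter_insert]
    by_cases hfa : f a = d
    · rw [if_pos hfa, Finset.sum_insert (by simp [hnot])]
      congr 1
      exact DirectSum.decompose_of_mem_same ℳ (hfa ▸ hz a (Finset.mem_insert_self a s))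
    · rw [if_neg hfa,
        DirectSum.decompose_of_mem_ne ℳ (hz a (Finset.mem_insert_self a s)) hfa, zero_add]

theorem structure_lemma
    (k w : ℕ) (𝕜 : Type*) [Field 𝕜]
    (dvec : Fin w → (Fin k → ℤ))
    (M : Type*) [AddCommGroup M] [Module 𝕜 M]
    [Module (MvPolynomial (Fin w) 𝕜) M]
    [IsScalarTower 𝕜 (MvPolynomial (Fin w) 𝕜) M]
    [Module.Finite (MvPolynomial (Fin w) 𝕜) M]
    (ℳ : ((Fin k → ℤ) × ℤ) → Submodule 𝕜 M)
    [DirectSum.Decomposition ℳ]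
    (hsmul : ∀ (e : (Fin k → ℤ) × ℤ) (n : (Fin k → ℤ) × ℤ),
      ∀ s ∈ weightedHomogeneousSubmodule 𝕜 (fun s : Fin w => ((dvec s, 1) :
        (Fin k → ℤ) × ℤ)) e,
      ∀ m ∈ ℳ n, s • m ∈ ℳ (e + n)) :
    ∃ L : List (((Fin k → ℤ) × ℤ) × Finset (Fin w)),
      ∀ d, ℳ d ≠ ⊥ ↔ ∃ p ∈ L, InPiece dvec p d := by
  classical
  haveI : IsNoetherian (MvPolynomial (Fin w) 𝕜) M :=
    isNoetherian_of_isNoetherianRing_of_finite _ _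
  set wts : Fin w → (Fin k → ℤ) × ℤ := fun s => (dvec s, 1) with hwts
  have key : ∀ N : Submodule (MvPolynomial (Fin w) 𝕜) M,
      (∀ y ∈ N, ∀ d, ((DirectSum.decompose ℳ y) d : M) ∈ N) →
      ∃ L : List (((Fin k → ℤ) × ℤ) × Finset (Fin w)),
        ∀ d, (∃ y ∈ ℳ d, y ∉ N) ↔ ∃ p ∈ L, InPiece dvec p d := by
    intro N
    induction N using IsNoetherian.induction with
    | hgt N IH =>
      intro hN
      by_cases hall : ∀ d, ∀ y ∈ ℳ d, y ∈ N
      · refine ⟨[], fun d => ⟨?_, by simp⟩⟩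
        rintro ⟨y, hy, hyn⟩
        exact absurd (hall d y hy) hyn
      · push_neg at hall
        obtain ⟨t1, x1, hx1, hx1n⟩ := hall
        obtain ⟨I, ⟨t, x, hx, hxn, hI⟩, hImax⟩ :=
          (set_has_maximal_iff_noetherian.mpr inferInstance)
            {I : Ideal (MvPolynomial (Fin w) 𝕜) |
              ∃ d x, x ∈ ℳ d ∧ x ∉ N ∧ I = N.colon {x}}
            ⟨N.colon {x1}, t1, x1, hx1, hx1n, rfl⟩
        subst hI
        -- homogeneity of monomial multiples of x
        have hmem : ∀ (α : Fin w →₀ ℕ) (c : 𝕜),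
            (monomial α c : MvPolynomial (Fin w) 𝕜) • x
              ∈ ℳ (Finsupp.weight wts α + t) := fun α c =>
          hsmul _ _ _
            ((mem_weightedHomogeneousSubmodule _ _ _ _).mpr
              (isWeightedHomogeneous_monomial wts α c rfl)) x hx
        -- colon ideal grows under monomial multiplication
        have hcol_le : ∀ (μ : MvPolynomial (Fin w) 𝕜),
            N.colon {x} ≤ N.colon {μ • x} := by
          intro μ p hp
          rw [Submodule.mem_colon_singleton] at hp ⊢
          rw [smul_smul, mul_comm, mul_smul]
          exact Submodule.smul_mem _ _ hp
        have hcol_eq : ∀ (d' : (Fin k → ℤ) × ℤ) (z : M), z ∈ ℳ d' → z ∉ N →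
            N.colon {x} ≤ N.colon {z} →
            N.colon {z} = N.colon {x} := by
          intro d' z hz hzn hle
          by_contra hne
          exact hImax _ ⟨d', z, hz, hzn, rfl⟩ (lt_of_le_of_ne hle (Ne.symm hne))
        set V : Finset (Fin w) :=
          Finset.univ.filter (fun s => (X s : MvPolynomial (Fin w) 𝕜) • x ∉ N) with hV
        have hXdef : ∀ s, (X s : MvPolynomial (Fin w) 𝕜)
            = monomial (Finsupp.single s 1) 1 := fun s => rfl
        have hfactor : ∀ (α : Fin w →₀ ℕ) (s : Fin w), α s ≠ 0 →
            (monomial α (1:𝕜) : MvPolynomial (Fin w) 𝕜)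
              = X s * monomial (α - Finsupp.single s 1) (1:𝕜) := by
          intro α s hs
          have hβα : Finsupp.single s 1 + (α - Finsupp.single s 1) = α := by
            ext u
            rcases eq_or_ne s u with rfl | hsu
            · simp only [Finsupp.add_apply, Finsupp.tsub_apply, Finsupp.single_eq_same]
              omega
            · simp [Finsupp.add_apply, Finsupp.tsub_apply, Finsupp.single_eq_of_ne hsu.symm]
          rw [hXdef, monomial_mul, one_mul, hβα]
        -- monomials in variables outside N-killers do not push x into N
        have hmono_not : ∀ (n : ℕ) (α : Fin w →₀ ℕ),
            Finsupp.weight (fun _ => (1:ℕ)) α = n →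
            (∀ s, α s ≠ 0 → (X s : MvPolynomial (Fin w) 𝕜) • x ∉ N) →
            (monomial α (1:𝕜) : MvPolynomial (Fin w) 𝕜) • x ∉ N := by
          intro n
          induction n with
          | zero =>
            intro α hα _
            have hα0 : α = 0 := by
              ext u
              simp only [Finsupp.coe_zero, Pi.zero_apply]
              by_contra hu
              have h1 : α u ≤ Finsupp.weight (fun _ => (1:ℕ)) α := by
                rw [Finsupp.weight_apply, Finsupp.sum]
                have : α u • (1:ℕ) = α u := by simp
                rw [← this]
                exact Finset.single_le_sum (f := fun i => α i • (1:ℕ))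
                  (fun i _ => Nat.zero_le _) (Finsupp.mem_support_iff.mpr hu)
              omega
            subst hα0
            rw [show (monomial (0 : Fin w →₀ ℕ) (1:𝕜) : MvPolynomial (Fin w) 𝕜) = 1 by
              simp, one_smul]
            exact hxn
          | succ n ih =>
            intro α hα hout
            have hαne : α ≠ 0 := by
              intro h
              rw [h] at hα
              simp at hα
            obtain ⟨s, hs⟩ : ∃ s, α s ≠ 0 := by
              by_contra h
              push_neg at h
              exact hαne (Finsupp.ext h)
            set β := α - Finsupp.single s 1 with hβ
            have hβα : Finsupp.single s 1 + β = α := by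
              ext u
              rcases eq_or_ne s u with rfl | hsu
              · simp only [hβ, Finsupp.add_apply, Finsupp.tsub_apply, Finsupp.single_eq_same]
                omega
              · simp [hβ, Finsupp.add_apply, Finsupp.tsub_apply,
                  Finsupp.single_eq_of_ne hsu.symm]
            have hβn : Finsupp.weight (fun _ => (1:ℕ)) β = n := by
              have h1 : Finsupp.weight (fun _ => (1:ℕ)) (Finsupp.single s 1 + β)
                  = Finsupp.weight (fun _ => (1:ℕ)) (Finsupp.single s 1)
                    + Finsupp.weight (fun _ => (1:ℕ)) β := map_add _ _ _
              have h2 : Finsupp.weight (fun _ => (1:ℕ)) (Finsupp.single s 1) = 1 := by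
                rw [Finsupp.weight_apply, Finsupp.sum_single_index] <;> simp
              rw [hβα, hα] at h1
              omega
            have hβout : ∀ u, β u ≠ 0 → (X u : MvPolynomial (Fin w) 𝕜) • x ∉ N := by
              intro u hu
              apply hout
              intro hau
              apply hu
              simp [hβ, Finsupp.tsub_apply, hau]
            have hzn : (monomial β (1:𝕜) : MvPolynomial (Fin w) 𝕜) • x ∉ N :=
              ih β hβn hβout
            have hz : (monomial β (1:𝕜) : MvPolynomial (Fin w) 𝕜) • x
                ∈ ℳ (Finsupp.weight wts β + t) := hmem β 1
            intro hcon
            rw [hfactor α s hs, mul_smul] at hcon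
            have hXs : (X s : MvPolynomial (Fin w) 𝕜)
                ∈ N.colon {(monomial β (1:𝕜) :
                  MvPolynomial (Fin w) 𝕜) • x} :=
              Submodule.mem_colon_singleton.mpr hcon
            rw [hcol_eq _ _ hz hzn (hcol_le _)] at hXs
            exact hout s hs (Submodule.mem_colon_singleton.mp hXs)
        have hmono_not' : ∀ (α : Fin w →₀ ℕ),
            (∀ s, α s ≠ 0 → (X s : MvPolynomial (Fin w) 𝕜) • x ∉ N) →
            (monomial α (1:𝕜) : MvPolynomial (Fin w) 𝕜) • x ∉ N :=
          fun α => hmono_not _ α rfl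
        -- decomposition of polynomial multiples of x
        have hdecomp : ∀ (p : MvPolynomial (Fin w) 𝕜) (d : (Fin k → ℤ) × ℤ),
            ((DirectSum.decompose ℳ (p • x)) d : M) =
              ∑ α ∈ p.support.filter (fun α => Finsupp.weight wts α + t = d),
                (monomial α (p.coeff α) : MvPolynomial (Fin w) 𝕜) • x := by
          intro p d
          have hps : p • x = ∑ α ∈ p.support,
              (monomial α (p.coeff α) : MvPolynomial (Fin w) 𝕜) • x := by
            conv_lhs => rw [p.as_sum]
            rw [Finset.sum_smul]
          rw [hps]
          exact decompose_sum ℳ _ _ _ (fun α _ => hmem α _) d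
        set N' := N ⊔ Submodule.span (MvPolynomial (Fin w) 𝕜) {x} with hN'def
        have hxN' : x ∈ N' := Submodule.mem_sup_right (Submodule.mem_span_singleton_self x)
        have hlt : N < N' := lt_of_le_of_ne le_sup_left
          (fun h => hxn (by rw [h]; exact hxN'))
        have hN'homog : ∀ y ∈ N', ∀ d, ((DirectSum.decompose ℳ y) d : M) ∈ N' := by
          intro y hy d
          rw [hN'def, Submodule.mem_sup] at hy
          obtain ⟨a, haN, b, hb, rfl⟩ := hy
          obtain ⟨p, rfl⟩ := Submodule.mem_span_singleton.mp hb
          rw [DirectSum.decompose_add, DirectSum.add_apply, Submodule.coe_add]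
          refine Submodule.add_mem _ (Submodule.mem_sup_left (hN a haN d)) ?_
          rw [hdecomp]
          refine Submodule.sum_mem _ fun α hα => ?_
          exact Submodule.mem_sup_right
            (Submodule.smul_mem _ _ (Submodule.mem_span_singleton_self x))
        obtain ⟨L', hL'⟩ := IH N' hlt hN'homog
        refine ⟨(t, V) :: L', fun d => ?_⟩
        constructor
        · rintro ⟨y, hy, hyn⟩
          by_cases hyN' : ∃ z ∈ ℳ d, z ∉ N'
          · obtain ⟨p, hp, hIn⟩ := (hL' d).mp hyN'
            exact ⟨p, List.mem_cons_of_mem _ hp, hIn⟩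
          · push_neg at hyN'
            have hyN'2 : y ∈ N' := hyN' y hy
            rw [hN'def, Submodule.mem_sup] at hyN'2
            obtain ⟨a, haN, b, hb, hy_eq⟩ := hyN'2
            obtain ⟨p, rfl⟩ := Submodule.mem_span_singleton.mp hb
            have hyd : y = ((DirectSum.decompose ℳ a) d : M) +
                ∑ α ∈ p.support.filter (fun α => Finsupp.weight wts α + t = d),
                  (monomial α (p.coeff α) : MvPolynomial (Fin w) 𝕜) • x := by
              conv_lhs => rw [← DirectSum.decompose_of_mem_same ℳ hy, ← hy_eq]
              rw [DirectSum.decompose_add, DirectSum.add_apply, Submodule.coe_add, hdecomp]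
            have hexists : ∃ α ∈ p.support.filter
                (fun α => Finsupp.weight wts α + t = d),
                (monomial α (1:𝕜) : MvPolynomial (Fin w) 𝕜) • x ∉ N := by
              by_contra hforall
              push_neg at hforall
              apply hyn
              rw [hyd]
              refine Submodule.add_mem _ (hN a haN d) (Submodule.sum_mem _ fun α hα => ?_)
              have h1 := hforall α hα
              have h2 : (monomial α (p.coeff α) : MvPolynomial (Fin w) 𝕜) • x
                  = (C (p.coeff α) : MvPolynomial (Fin w) 𝕜) •
                    ((monomial α (1:𝕜) : MvPolynomial (Fin w) 𝕜) • x) := by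
                rw [← mul_smul, C_mul_monomial, mul_one]
              rw [h2]
              exact Submodule.smul_mem _ _ h1
            obtain ⟨α, hαmem, hαnot⟩ := hexists
            rw [Finset.mem_filter] at hαmem
            refine ⟨(t, V), List.mem_cons_self, α, ?_, ?_⟩
            · intro s hs
              rw [hV, Finset.mem_filter]
              refine ⟨Finset.mem_univ s, ?_⟩
              intro hXs
              apply hαnot
              rw [hfactor α s hs, mul_comm, mul_smul]
              exact Submodule.smul_mem _ _ hXs
            · rw [← hαmem.2, add_comm]
        · rintro ⟨p, hp, hIn⟩
          rcases List.mem_cons.mp hp with rfl | hp'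
          · obtain ⟨α, hαV, rfl⟩ := hIn
            refine ⟨(monomial α (1:𝕜) : MvPolynomial (Fin w) 𝕜) • x, ?_, ?_⟩
            · have h1 := hmem α 1
              rwa [add_comm] at h1
            · refine hmono_not' α fun s hs => ?_
              have h2 := hαV s hs
              rw [hV, Finset.mem_filter] at h2
              exact h2.2
          · obtain ⟨y, hy, hyn⟩ := (hL' _).mpr ⟨p, hp', hIn⟩
            exact ⟨y, hy, fun hyN => hyn (Submodule.mem_sup_left hyN)⟩
  have hbot : ∀ y ∈ (⊥ : Submodule (MvPolynomial (Fin w) 𝕜) M),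
      ∀ d, ((DirectSum.decompose ℳ y) d : M) ∈ (⊥ : Submodule (MvPolynomial (Fin w) 𝕜) M) := by
    intro y hy d
    rw [Submodule.mem_bot] at hy
    subst hy
    rw [Submodule.mem_bot, DirectSum.decompose_zero]
    simp
  obtain ⟨L, hKey⟩ := key ⊥ hbot
  refine ⟨L, fun d => ?_⟩
  rw [← hKey d, Submodule.ne_bot_iff]
  simp [Submodule.mem_bot]

end AInvAux

/-- Let `R = 𝕜[Y₁,…,Y_w]` with `deg Y_s = (d_s, 1) ∈ ℤ^{k+1}`, the
`d_s ∈ ℤ^k` having nonnegative entries, and let `ℳ` be a finitely generated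
`ℤ^{k+1}`-graded `R`-module.  Setting `a_l(ℳ_n) = max { m l | ℳ_{(m,n)} ≠ 0 }`, the
function `n ↦ a_l(ℳ_n)` is eventually linear in `n` with slope at most
`d^{(l)} = max_s (d_s)_l` (or `ℳ_n = 0` for all `n ≫ 0`); in the base case `w = 0`
(`R = 𝕜`), `ℳ_n = 0` for all `n ≫ 0`. -/
theorem aInv_eventually_linear
    (k w : ℕ) (𝕜 : Type*) [Field 𝕜]
    (dvec : Fin w → (Fin k → ℤ)) (hpos : ∀ s l', 0 ≤ dvec s l')
    (M : Type*) [AddCommGroup M] [Module 𝕜 M]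
    [Module (MvPolynomial (Fin w) 𝕜) M]
    [IsScalarTower 𝕜 (MvPolynomial (Fin w) 𝕜) M]
    [Module.Finite (MvPolynomial (Fin w) 𝕜) M]
    (ℳ : ((Fin k → ℤ) × ℤ) → Submodule 𝕜 M)
    [DirectSum.Decomposition ℳ]
    (hsmul : ∀ (e : (Fin k → ℤ) × ℤ) (n : (Fin k → ℤ) × ℤ),
      ∀ s ∈ weightedHomogeneousSubmodule 𝕜 (fun s : Fin w => ((dvec s, 1) :
        (Fin k → ℤ) × ℤ)) e,
      ∀ m ∈ ℳ n, s • m ∈ ℳ (e + n))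
    (l : Fin k) (dl : ℤ) (hdl : ∀ s, dvec s l ≤ dl) :
    ((∃ a b : ℤ, a ≤ dl ∧ ∃ n₀ : ℤ, ∀ n ≥ n₀,
          IsGreatest {m : ℤ | ∃ v : Fin k → ℤ, v l = m ∧ ℳ (v, n) ≠ ⊥}
            (a * n + b)) ∨
        (∃ n₀ : ℤ, ∀ n ≥ n₀, ∀ v : Fin k → ℤ, ℳ (v, n) = ⊥)) ∧
      (w = 0 → ∃ n₀ : ℤ, ∀ n ≥ n₀, ∀ v : Fin k → ℤ, ℳ (v, n) = ⊥) := by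
  obtain ⟨L, hL⟩ := AInvAux.structure_lemma k w 𝕜 dvec M ℳ hsmul
  obtain ⟨h1, h2⟩ := AInvAux.combinatorial dvec hpos l dl hdl (fun d => ℳ d ≠ ⊥) L hL
  constructor
  · rcases h1 with h | ⟨n₀, hn⟩
    · exact Or.inl h
    · exact Or.inr ⟨n₀, fun n hn' v => not_not.mp (hn n hn' v)⟩
  · intro hw
    obtain ⟨n₀, hn⟩ := h2 hw
    exact ⟨n₀, fun n hn' v => not_not.mp (hn n hn' v)⟩
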